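/- Let φ and ψ be injective commuting endomorphisms of a countable abelian group G, and let s_φ, s_ψ be the isometries on ℓ²(G) defined on basis vectors by s_φ(ξ_g) = ξ_{φ(g)} and s_ψ(ξ_g) = ξ_{ψ(g)}. Then s_φ* s_ψ = s_ψ s_φ* if and only if φ(G) ∩ ψ(G) = φψ(G). -/

import Mathlib

open ComplexConjugate

section aux

set_option linter.unusedSectionVars false
variable {G : Type*} [AddCommGroup G] [Countable G] [DecidableEq G]

local notation "H" => lp (fun _ : G => ℂ) 2

/-- coordinate of a vector as an inner product -/
lemma coord_eq_inner (f : H) (g : G) : f g = inner ℂ (lp.single 2 g (1 : ℂ)) f := by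
  rw [lp.inner_single_left]
  simp

/-- two CLMs agreeing on all singles are equal -/
lemma ext_single (A B : H →L[ℂ] H)
    (h : ∀ g : G, A (lp.single 2 g 1) = B (lp.single 2 g 1)) : A = B := by
  refine ContinuousLinearMap.ext fun f => ?_
  have hf : HasSum (fun i : G => lp.single 2 i (f i)) f :=
    lp.hasSum_single ENNReal.ofNat_ne_top f
  have hA : HasSum (fun i : G => A (lp.single 2 i (f i))) (A f) := A.hasSum hf
  have hB : HasSum (fun i : G => B (lp.single 2 i (f i))) (B f) := B.hasSum hf
  refine hA.unique ?_
  convert hB using 2 with i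
  have h1 : lp.single (E := fun _ : G => ℂ) 2 i (f i) = f i • lp.single 2 i (1 : ℂ) := by
    rw [← lp.single_smul]
    norm_num
  rw [h1, map_smul, map_smul, h i]

/-- coordinates of adjoint applied to a single -/
lemma adj_single_coord (φ : G →+ G) (S : H →L[ℂ] H)
    (hS : ∀ g : G, S (lp.single 2 g 1) = lp.single 2 (φ g) 1) (h g : G) :
    (ContinuousLinearMap.adjoint S (lp.single 2 h 1)) g
      = if φ g = h then 1 else 0 := by
  rw [coord_eq_inner, ContinuousLinearMap.adjoint_inner_right, hS,
    lp.inner_single_left, lp.single_apply]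
  by_cases hgh : φ g = h
  · simp [hgh]
  · have : ¬ (h = φ g) := fun e => hgh e.symm
    simp [hgh, this]

lemma adj_single_mem (φ : G →+ G) (hφ : Function.Injective φ) (S : H →L[ℂ] H)
    (hS : ∀ g : G, S (lp.single 2 g 1) = lp.single 2 (φ g) 1) (k : G) :
    ContinuousLinearMap.adjoint S (lp.single 2 (φ k) 1) = lp.single 2 k 1 := by
  refine lp.ext (funext fun g => ?_)
  rw [adj_single_coord φ S hS, lp.single_apply]
  by_cases hg : g = k
  · simp [hg]
  · have : φ g ≠ φ k := fun e => hg (hφ e)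
    simp [hg, this]

lemma adj_single_not_mem (φ : G →+ G) (S : H →L[ℂ] H)
    (hS : ∀ g : G, S (lp.single 2 g 1) = lp.single 2 (φ g) 1) {h : G}
    (hh : h ∉ φ.range) :
    ContinuousLinearMap.adjoint S (lp.single 2 h 1) = 0 := by
  refine lp.ext (funext fun g => ?_)
  rw [adj_single_coord φ S hS]
  have : φ g ≠ h := fun e => hh ⟨g, e⟩
  simp [this]

end aux

theorem stmt7 {G : Type*} [AddCommGroup G] [Countable G] [DecidableEq G]
    (φ ψ : G →+ G) (hφ : Function.Injective φ) (hψ : Function.Injective ψ)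
    (hc : φ.comp ψ = ψ.comp φ)
    (S T : lp (fun _ : G => ℂ) 2 →L[ℂ] lp (fun _ : G => ℂ) 2)
    (hS : ∀ g : G, S (lp.single 2 g 1) = lp.single 2 (φ g) 1)
    (hT : ∀ g : G, T (lp.single 2 g 1) = lp.single 2 (ψ g) 1) :
    (ContinuousLinearMap.adjoint S) ∘L T = T ∘L (ContinuousLinearMap.adjoint S)
      ↔ φ.range ⊓ ψ.range = (φ.comp ψ).range := by
  have hc' : ∀ m : G, φ (ψ m) = ψ (φ m) := fun m =>
    congrArg (fun f : G →+ G => f m) hc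
  constructor
  · intro heq
    refine le_antisymm ?_ ?_
    · rintro x ⟨⟨a, ha⟩, ⟨b, hb⟩⟩
      -- x = φ a = ψ b
      have key := congrArg (fun A : lp (fun _ : G => ℂ) 2 →L[ℂ] lp (fun _ : G => ℂ) 2 =>
        A (lp.single 2 b 1)) heq
      simp only [ContinuousLinearMap.comp_apply] at key
      rw [hT b, hb, ← ha, adj_single_mem φ hφ S hS] at key
      -- key : lp.single 2 a 1 = T (adjoint S (lp.single 2 b 1))
      by_cases hbr : b ∈ φ.range
      · obtain ⟨k, hk⟩ := hbr
        rw [← hk, adj_single_mem φ hφ S hS, hT] at key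
        -- key : lp.single 2 a 1 = lp.single 2 (ψ k) 1
        have hak : a = ψ k := by
          by_contra hne
          have := congrArg (fun f : lp (fun _ : G => ℂ) 2 => f a) key
          simp only [lp.single_apply_self] at this
          rw [lp.single_apply_ne 2 (ψ k) 1 hne] at this
          exact one_ne_zero this
        exact ⟨k, by rw [AddMonoidHom.comp_apply, ← hak, ha]⟩
      · rw [adj_single_not_mem φ S hS hbr, map_zero] at key
        have := congrArg (fun f : lp (fun _ : G => ℂ) 2 => f a) key
        simp only [lp.single_apply_self] at this
        exact absurd this one_ne_zero
    · rintro x ⟨m, hm⟩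
      exact ⟨⟨ψ m, hm⟩, ⟨φ m, by rw [← hc' m]; exact hm⟩⟩
  · intro hrange
    refine ext_single _ _ fun g => ?_
    simp only [ContinuousLinearMap.comp_apply]
    rw [hT g]
    by_cases hgr : ψ g ∈ φ.range
    · have hmem : ψ g ∈ (φ.comp ψ).range := by
        rw [← hrange]; exact ⟨hgr, ⟨g, rfl⟩⟩
      obtain ⟨m, hm⟩ := hmem
      rw [AddMonoidHom.comp_apply] at hm
      have hg : g = φ m := hψ (by rw [← hm, hc' m])
      have step1 : ContinuousLinearMap.adjoint S (lp.single 2 (ψ g) 1)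
          = lp.single 2 (ψ m) 1 := by
        rw [← hm]
        exact adj_single_mem φ hφ S hS (ψ m)
      rw [step1, hg, adj_single_mem φ hφ S hS, hT]
    · have hg : g ∉ φ.range := by
        rintro ⟨m, hm⟩
        exact hgr ⟨ψ m, by rw [hc' m, hm]⟩
      rw [adj_single_not_mem φ S hS hgr, adj_single_not_mem φ S hS hg, map_zero]
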